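/- For a simple undirected 2-edge-connected graph G, the set system (V(G), C_e), where C_e is the family of vertex subsets of size > 1 inducing 2-edge-connected subgraphs, has subset-disjoint (SD) property: for any C, C' ∈ C_e with C' ⊊ C and any minimal removable set Y of C, either Y ⊆ C' or Y ∩ C' = ∅. -/

import Mathlib

open Set

/-- `Y` is a minimal removable set (MRS) of component `C` in set system `𝒞`. -/
def IsMRS {α : Type*} (𝒞 : Set (Set α)) (C Y : Set α) : Prop :=
  Y.Nonempty ∧ Y ⊆ C ∧ C \ Y ∈ 𝒞 ∧ ∀ Z : Set α, Z.Nonempty → Z ⊂ Y → C \ Z ∉ 𝒞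

/-- The set system `𝒞` has the subset-disjoint (SD) property. -/
def SDProperty {α : Type*} (𝒞 : Set (Set α)) : Prop :=
  ∀ C ∈ 𝒞, ∀ C' ∈ 𝒞, C' ⊂ C → ∀ Y : Set α, IsMRS 𝒞 C Y → Y ⊆ C' ∨ Y ∩ C' = ∅

/-- A graph is 2-edge-connected: connected and has no bridge. -/
def TwoEC {V : Type*} (H : SimpleGraph V) : Prop :=
  H.Connected ∧ ∀ e : Sym2 V, ¬ H.IsBridge e

/-- A graph is 2-vertex-connected: more than 2 vertices and removing any vertex keeps it connected. -/
def TwoVC {V : Type*} (H : SimpleGraph V) : Prop :=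
  2 < Nat.card V ∧ ∀ v : V, (H.induce ({v}ᶜ : Set V)).Connected

/-- Family of vertex subsets of size `> 1` inducing 2-edge-connected subgraphs. -/
def Ce {V : Type*} (G : SimpleGraph V) : Set (Set V) :=
  {C | TwoEC (G.induce C) ∧ 1 < C.ncard}

/-- Family of vertex subsets inducing 2-vertex-connected subgraphs. -/
def Cv {V : Type*} (G : SimpleGraph V) : Set (Set V) :=
  {C | TwoVC (G.induce C)}

/-- Degree of `v` in the induced subgraph `G[C]`. -/
noncomputable def degIn {V : Type*} (G : SimpleGraph V) (C : Set V) (v : V) : ℕ :=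
  (G.neighborSet v ∩ C).ncard

/-- `P` is a two-deg path in `G[C]`: all vertices of degree 2, inducing a connected subgraph. -/
def TwoDegPath {V : Type*} (G : SimpleGraph V) (C P : Set V) : Prop :=
  P ⊆ C ∧ (∀ u ∈ P, degIn G C u = 2) ∧ (G.induce P).Connected

/-- `P` is a maximal two-deg path in `G[C]`. -/
def MaxTwoDegPath {V : Type*} (G : SimpleGraph V) (C P : Set V) : Prop :=
  TwoDegPath G C P ∧ ∀ P' : Set V, TwoDegPath G C P' → P ⊆ P' → P' = P

/-- `Y` is a candidate of `C`: a maximal two-deg path or a singleton of a vertex of degree `> 2`. -/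
def Can {V : Type*} (G : SimpleGraph V) (C Y : Set V) : Prop :=
  MaxTwoDegPath G C Y ∨ ∃ v ∈ C, 2 < degIn G C v ∧ Y = {v}

/-- A graph is a cycle: connected and every vertex has exactly two neighbours. -/
def IsCycleGraph {W : Type*} (H : SimpleGraph W) : Prop :=
  H.Connected ∧ ∀ v : W, (H.neighborSet v).ncard = 2

/-- `S` is a maximal subset of `C` inducing a 2-vertex-connected subgraph. -/
def IsMaxVComp {V : Type*} (G : SimpleGraph V) (C S : Set V) : Prop :=
  S ⊆ C ∧ TwoVC (G.induce S) ∧ ∀ S' : Set V, S ⊆ S' → S' ⊆ C → TwoVC (G.induce S') → S' = S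

namespace SD9

open SimpleGraph

variable {V : Type*}


/-- The restriction of `G` to edges inside `S`, as a graph on `V`. -/
def Gr (G : SimpleGraph V) (S : Set V) : SimpleGraph V where
  Adj a b := G.Adj a b ∧ a ∈ S ∧ b ∈ S
  symm := ⟨fun a b h => ⟨h.1.symm, h.2.2, h.2.1⟩⟩
  loopless := ⟨fun a h => G.loopless.irrefl a h.1⟩

lemma gr_le (G : SimpleGraph V) (S : Set V) : Gr G S ≤ G := fun _ _ h => h.1

lemma gr_mono (G : SimpleGraph V) {S T : Set V} (h : S ⊆ T) : Gr G S ≤ Gr G T :=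
  fun _ _ hab => ⟨hab.1, h hab.2.1, h hab.2.2⟩

lemma gr_adj {G : SimpleGraph V} {S : Set V} {x y : V} :
    (Gr G S).Adj x y ↔ G.Adj x y ∧ x ∈ S ∧ y ∈ S := Iff.rfl

/-- All pairs in `S` are `H`-reachable. -/
def ConnOn (H : SimpleGraph V) (S : Set V) : Prop := ∀ u ∈ S, ∀ v ∈ S, H.Reachable u v

/-- `S` induces a 2-edge-connected subgraph, expressed at the level of graphs on `V`:
deleting any single edge keeps all of `S` mutually reachable inside `S`. -/
def OK (G : SimpleGraph V) (S : Set V) : Prop :=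
  S.Nonempty ∧ ∀ e : Sym2 V, ConnOn (Gr G S \ fromEdgeSet {e}) S

lemma del_adj {H : SimpleGraph V} {e : Sym2 V} {x y : V} :
    (H \ fromEdgeSet {e}).Adj x y ↔ H.Adj x y ∧ s(x, y) ≠ e := by
  rw [sdiff_adj, fromEdgeSet_adj]
  constructor
  · rintro ⟨h1, h2⟩
    exact ⟨h1, fun hh => h2 ⟨by simp [hh], h1.ne⟩⟩
  · rintro ⟨h1, h2⟩
    exact ⟨h1, fun hh => h2 (by simpa using hh.1)⟩

lemma del_le {H K : SimpleGraph V} (h : H ≤ K) (e : Sym2 V) :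
    H \ fromEdgeSet {e} ≤ K \ fromEdgeSet {e} := by
  intro x y hxy
  rw [del_adj] at hxy ⊢
  exact ⟨h hxy.1, hxy.2⟩

lemma reach_of_walk_edges {W : Type*} {H K : SimpleGraph W} {u v : W} (w : H.Walk u v)
    (h : ∀ x y : W, s(x, y) ∈ w.edges → K.Adj x y) : K.Reachable u v := by
  induction w with
  | nil => exact Reachable.refl _
  | @cons a b c h' p ih =>
    refine (SimpleGraph.Adj.reachable (h a b ?_)).trans (ih fun x y hxy => h x y ?_)
    · simp [Walk.edges_cons]
    · simp [Walk.edges_cons, hxy]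

lemma reach_del_of_detour' {H : SimpleGraph V} {x y : V}
    (hdet : (H \ fromEdgeSet {s(x, y)}).Reachable x y) :
    ∀ {u v : V}, H.Walk u v → (H \ fromEdgeSet {s(x, y)}).Reachable u v := by
  intro u v w
  induction w with
  | nil => exact Reachable.refl _
  | @cons a b c h' p ih =>
    refine Reachable.trans ?_ ih
    by_cases he : s(a, b) = s(x, y)
    · rw [Sym2.eq_iff] at he
      rcases he with ⟨rfl, rfl⟩ | ⟨rfl, rfl⟩
      · exact hdet
      · exact hdet.symm
    · exact (del_adj.mpr ⟨h', he⟩).reachable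

lemma reach_del_of_detour {H : SimpleGraph V} {x y u v : V}
    (hdet : (H \ fromEdgeSet {s(x, y)}).Reachable x y) (h : H.Reachable u v) :
    (H \ fromEdgeSet {s(x, y)}).Reachable u v := by
  obtain ⟨w⟩ := h
  exact reach_del_of_detour' hdet w

lemma gr_walk_support {G : SimpleGraph V} {S : Set V} {K : SimpleGraph V} (hK : K ≤ Gr G S) :
    ∀ {u v : V}, (w : K.Walk u v) → u ∈ S → ∀ x ∈ w.support, x ∈ S := by
  intro u v w
  induction w with
  | nil => intro hu x hx; simp only [Walk.support_nil, List.mem_singleton] at hx; exact hx ▸ hu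
  | @cons a b c h' p ih =>
    intro hu x hx
    rw [Walk.support_cons, List.mem_cons] at hx
    rcases hx with rfl | hx
    · exact hu
    · exact ih (hK h').2.2 x hx

lemma cross_edge {K : SimpleGraph V} {R : Set V} :
    ∀ {u v : V}, K.Walk u v → u ∈ R → v ∉ R → ∃ x y, K.Adj x y ∧ x ∈ R ∧ y ∉ R := by
  intro u v w
  induction w with
  | nil => intro hu hv; exact absurd hu hv
  | @cons a b c h' p ih =>
    intro hu hv
    by_cases hb : b ∈ R
    · exact ih hb hv
    · exact ⟨a, b, h', hu, hb⟩

-- downward transfer : induce → Gr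
lemma transfer_down_plain {G : SimpleGraph V} {S : Set V} {a b : S}
    (h : (G.induce S).Reachable a b) : (Gr G S).Reachable (a : V) (b : V) := by
  let f : G.induce S →g Gr G S :=
    { toFun := Subtype.val, map_rel' := fun {x y} hxy => ⟨hxy, x.2, y.2⟩ }
  exact h.map f

lemma transfer_down {G : SimpleGraph V} {S : Set V} (e' : Sym2 S) {a b : S}
    (h : ((G.induce S) \ fromEdgeSet {e'}).Reachable a b) :
    ((Gr G S) \ fromEdgeSet {Sym2.map Subtype.val e'}).Reachable (a : V) (b : V) := by
  let f : ((G.induce S) \ fromEdgeSet {e'}) →g ((Gr G S) \ fromEdgeSet {Sym2.map Subtype.val e'}) :=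
    { toFun := Subtype.val,
      map_rel' := by
        intro x y hxy
        rw [del_adj] at hxy ⊢
        refine ⟨⟨hxy.1, x.2, y.2⟩, fun hh => hxy.2 ?_⟩
        apply Sym2.map.injective Subtype.val_injective
        rw [Sym2.map_pair_eq]
        exact hh }
  exact h.map f

-- upward transfer : Gr → induce
lemma transfer_up_plain {G : SimpleGraph V} {S : Set V} :
    ∀ {u v : V}, (w : (Gr G S).Walk u v) → (hu : u ∈ S) → (hv : v ∈ S) →
      (G.induce S).Reachable ⟨u, hu⟩ ⟨v, hv⟩ := by
  intro u v w
  induction w with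
  | nil => intro hu hv; exact Reachable.refl _
  | @cons a b c h' p ih =>
    intro hu hv
    have hb : b ∈ S := h'.2.2
    have step : (G.induce S).Adj ⟨a, hu⟩ ⟨b, hb⟩ := h'.1
    exact step.reachable.trans (ih hb hv)

lemma transfer_up {G : SimpleGraph V} {S : Set V} (e' : Sym2 S) :
    ∀ {u v : V}, (w : ((Gr G S) \ fromEdgeSet {Sym2.map Subtype.val e'}).Walk u v) →
      (hu : u ∈ S) → (hv : v ∈ S) →
      ((G.induce S) \ fromEdgeSet {e'}).Reachable ⟨u, hu⟩ ⟨v, hv⟩ := by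
  intro u v w
  induction w with
  | nil => intro hu hv; exact Reachable.refl _
  | @cons a b c h' p ih =>
    intro hu hv
    rw [del_adj] at h'
    have hb : b ∈ S := h'.1.2.2
    have step : ((G.induce S) \ fromEdgeSet {e'}).Adj ⟨a, hu⟩ ⟨b, hb⟩ := by
      rw [del_adj]
      refine ⟨h'.1.1, fun hh => h'.2 ?_⟩
      rw [← hh, Sym2.map_pair_eq]
    exact step.reachable.trans (ih hb hv)


lemma ok_of_mem {G : SimpleGraph V} {S : Set V} (hS : S ∈ Ce G) : OK G S := by
  obtain ⟨⟨hconn, hbr⟩, hcard⟩ := hS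
  constructor
  · exact Set.nonempty_coe_sort.mp hconn.nonempty
  · intro e u hu v hv
    by_cases hex : ∃ x y, G.Adj x y ∧ x ∈ S ∧ y ∈ S ∧ s(x, y) = e
    · obtain ⟨x, y, hxy, hx, hy, rfl⟩ := hex
      have hadj : (G.induce S).Adj ⟨x, hx⟩ ⟨y, hy⟩ := hxy
      have hdet0 : ((G.induce S) \ fromEdgeSet {s((⟨x, hx⟩ : S), ⟨y, hy⟩)}).Reachable ⟨x, hx⟩ ⟨y, hy⟩ := by
        have h2 := hbr s((⟨x, hx⟩ : S), ⟨y, hy⟩)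
        rw [isBridge_iff] at h2
        exact not_not.mp h2
      have hdet := transfer_down _ hdet0
      rw [Sym2.map_pair_eq] at hdet
      have hr : (Gr G S).Reachable u v :=
        transfer_down_plain (hconn.preconnected ⟨u, hu⟩ ⟨v, hv⟩)
      exact reach_del_of_detour hdet hr
    · have hle : Gr G S ≤ Gr G S \ fromEdgeSet {e} := by
        intro x y hxy
        exact del_adj.mpr ⟨hxy, fun hh => hex ⟨x, y, hxy.1, hxy.2.1, hxy.2.2, hh⟩⟩
      exact (transfer_down_plain (hconn.preconnected ⟨u, hu⟩ ⟨v, hv⟩)).mono hle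

lemma connOn_of_ok {G : SimpleGraph V} {S : Set V} (hS : OK G S) : ConnOn (Gr G S) S := by
  intro u hu v hv
  rcases hS.1 with ⟨x, _⟩
  exact (hS.2 (Sym2.diag x) u hu v hv).mono sdiff_le

lemma mem_ce_of {G : SimpleGraph V} {S : Set V} (hS : OK G S) (hcard : 1 < S.ncard) :
    S ∈ Ce G := by
  have hpre : (G.induce S).Preconnected := by
    intro a b
    obtain ⟨w⟩ := connOn_of_ok hS a a.2 b b.2
    have := transfer_up_plain w a.2 b.2
    simpa using this
  refine ⟨⟨(connected_iff _).mpr ⟨hpre, ?_⟩, ?_⟩, hcard⟩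
  · rcases hS.1 with ⟨x, hx⟩
    exact ⟨⟨x, hx⟩⟩
  · intro e'
    induction e' using Sym2.ind with
    | _ a b =>
      rw [isBridge_iff]
      intro hnreach
      apply hnreach
      obtain ⟨w⟩ := hS.2 (Sym2.map Subtype.val s(a, b)) a a.2 b b.2
      have := transfer_up s(a, b) w a.2 b.2
      exact this

lemma dec_at_edge {W : Type*} {H : SimpleGraph W} :
    ∀ {y1 y2 : W} (q : H.Walk y1 y2) (e : Sym2 W), e ∈ q.edges →
      ∃ (c1 c2 : W) (h : H.Adj c1 c2) (t : H.Walk y1 c1) (d : H.Walk c2 y2),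
        q = t.append (Walk.cons h d) ∧ s(c1, c2) = e := by
  intro y1 y2 q
  induction q with
  | nil => intro e he; simp [Walk.edges_nil] at he
  | @cons a b c h' p ih =>
    intro e he
    rw [Walk.edges_cons, List.mem_cons] at he
    rcases he with he | he
    · exact ⟨a, b, h', Walk.nil, p, by rw [Walk.nil_append], he.symm⟩
    · obtain ⟨c1, c2, h, t, d, rfl, hse⟩ := ih e he
      exact ⟨c1, c2, h, Walk.cons h' t, d, by rw [Walk.cons_append], hse⟩

lemma chord_shortcut {W : Type*} [DecidableEq W] {H : SimpleGraph W} :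
    ∀ {a b : W} (q : H.Walk a b) (x z : W), x ∈ q.support → z ∈ q.support →
      H.Adj x z → s(x, z) ∉ q.edges → ∃ q' : H.Walk a b, q'.length < q.length := by
  intro a b q
  induction q with
  | nil =>
    intro x z hx hz hadj _
    rw [Walk.support_nil, List.mem_singleton] at hx hz
    subst hx; subst hz
    exact absurd hadj (H.loopless.irrefl _)
  | @cons a c b h' p ih =>
    intro x z hx hz hadj hne
    rw [Walk.support_cons, List.mem_cons] at hx hz
    have hne_p : s(x, z) ∉ p.edges := fun hh =>
      hne (by rw [Walk.edges_cons]; exact List.mem_cons_of_mem _ hh)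
    rcases hx with rfl | hx
    · have hzp : z ∈ p.support := by
        rcases hz with rfl | hz
        · exact absurd hadj (H.loopless.irrefl _)
        · exact hz
      refine ⟨Walk.cons hadj (p.dropUntil z hzp), ?_⟩
      rw [Walk.length_cons, Walk.length_cons]
      have hsplit := congrArg Walk.length (p.take_spec hzp)
      rw [Walk.length_append] at hsplit
      have h1 : (p.takeUntil z hzp).length ≠ 0 := by
        intro h0
        have hcz : c = z := Walk.eq_of_length_eq_zero h0
        subst hcz
        exact hne (by rw [Walk.edges_cons]; exact List.mem_cons_self)
      omega
    · rcases hz with rfl | hz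
      · refine ⟨Walk.cons hadj.symm (p.dropUntil x hx), ?_⟩
        rw [Walk.length_cons, Walk.length_cons]
        have hsplit := congrArg Walk.length (p.take_spec hx)
        rw [Walk.length_append] at hsplit
        have h1 : (p.takeUntil x hx).length ≠ 0 := by
          intro h0
          have hcx : c = x := Walk.eq_of_length_eq_zero h0
          apply hne
          rw [Walk.edges_cons, List.mem_cons]
          left
          rw [hcx]
          exact Sym2.eq_swap
        omega
      · obtain ⟨q', hq'⟩ := ih x z hx hz hadj hne_p
        exact ⟨Walk.cons h' q', by rw [Walk.length_cons, Walk.length_cons]; omega⟩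

lemma path_edge_sep {W : Type*} {H : SimpleGraph W} {y1 y2 b1 b2 : W}
    (q : H.Walk y1 y2) (hq : q.IsPath) (he : s(b1, b2) ∈ q.edges) :
    ¬ (fromEdgeSet {e' | e' ∈ q.edges} \ fromEdgeSet {s(b1, b2)}).Reachable b1 b2 := by
  obtain ⟨c1, c2, h, t, d, rfl, hse⟩ := dec_at_edge q _ he
  set q := t.append (Walk.cons h d) with hqdef
  have hnodup := hq.support_nodup
  rw [Walk.support_append, Walk.support_cons, List.tail_cons, List.nodup_append] at hnodup
  have hdisj : t.support.Disjoint d.support := fun _ ha hb => hnodup.2.2 _ ha _ hb rfl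
  have hedges : q.edges = t.edges ++ (s(c1, c2) :: d.edges) := by
    rw [hqdef, Walk.edges_append, Walk.edges_cons]
  set K := fromEdgeSet {e' | e' ∈ q.edges} \ fromEdgeSet {s(b1, b2)} with hKdef
  have stay : ∀ {u v : W}, (w : K.Walk u v) → u ∈ t.support → v ∈ t.support := by
    intro u v w
    induction w with
    | nil => exact id
    | @cons u m v h'' p' ih =>
      intro hu
      have h3 := h''
      rw [hKdef, del_adj, fromEdgeSet_adj] at h3
      obtain ⟨⟨hmem, _⟩, hne2⟩ := h3
      rw [Set.mem_setOf_eq, hedges, List.mem_append, List.mem_cons] at hmem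
      rcases hmem with hmem | hmem | hmem
      · exact ih (t.snd_mem_support_of_mem_edges hmem)
      · exact absurd (hmem.trans hse) hne2
      · exact absurd hu (fun hu' => hdisj hu' (d.fst_mem_support_of_mem_edges hmem))
  have hc1t : c1 ∈ t.support := t.end_mem_support
  have hc2d : c2 ∈ d.support := d.start_mem_support
  rw [Sym2.eq_iff] at hse
  rintro ⟨w⟩
  rcases hse with ⟨h1, h2⟩ | ⟨h1, h2⟩
  · subst h1; subst h2
    exact hdisj (stay w hc1t) hc2d
  · subst h1; subst h2
    exact hdisj (stay w.reverse hc1t) hc2d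

lemma ok_union {G : SimpleGraph V} {A B : Set V} (hA : OK G A) (hB : OK G B)
    (hAB : (A ∩ B).Nonempty) : OK G (A ∪ B) := by
  obtain ⟨x, hxA, hxB⟩ := hAB
  refine ⟨hA.1.mono Set.subset_union_left, ?_⟩
  intro e
  have key : ∀ w ∈ A ∪ B, (Gr G (A ∪ B) \ fromEdgeSet {e}).Reachable w x := by
    intro w hw
    rcases hw with hw | hw
    · exact (hA.2 e w hw x hxA).mono (del_le (gr_mono G Set.subset_union_left) e)
    · exact (hB.2 e w hw x hxB).mono (del_le (gr_mono G Set.subset_union_right) e)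
  intro u hu v hv
  exact (key u hu).trans (key v hv).symm

lemma ok_ear [DecidableEq V] {G : SimpleGraph V} {A : Set V} (hA : OK G A)
    {H : SimpleGraph V} (hHG : H ≤ G)
    {y1 y2 : V} (p : H.Walk y1 y2) (hp : p.IsPath) (hdisjA : ∀ v ∈ p.support, v ∉ A)
    {a1 a2 : V} (ha1 : a1 ∈ A) (ha2 : a2 ∈ A) (hadj1 : G.Adj y1 a1) (hadj2 : G.Adj y2 a2)
    (hne : s(y1, a1) ≠ s(y2, a2)) :
    OK G (A ∪ {v | v ∈ p.support}) := by
  set S : Set V := {v | v ∈ p.support} with hSdef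
  refine ⟨hA.1.mono Set.subset_union_left, ?_⟩
  intro e
  set K := Gr G (A ∪ S) \ fromEdgeSet {e} with hKdef
  have route : ∀ {c1 c2 : V} (w : H.Walk c1 c2), (∀ e' ∈ w.edges, e' ∈ p.edges) →
      e ∉ w.edges → K.Reachable c1 c2 := by
    intro c1 c2 w hsub hnot
    refine reach_of_walk_edges w fun x y hxy => ?_
    have hadj : H.Adj x y := w.adj_of_mem_edges hxy
    have hx : x ∈ p.support := p.fst_mem_support_of_mem_edges (hsub _ hxy)
    have hy : y ∈ p.support := p.snd_mem_support_of_mem_edges (hsub _ hxy)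
    rw [hKdef, del_adj]
    exact ⟨⟨hHG hadj, Or.inr hx, Or.inr hy⟩, fun hh => hnot (hh ▸ hxy)⟩
  have hy1S : y1 ∈ S := p.start_mem_support
  have hy2S : y2 ∈ S := p.end_mem_support
  have hs1_not : s(y1, a1) ∉ p.edges := fun hh =>
    hdisjA a1 (p.snd_mem_support_of_mem_edges hh) ha1
  have hs2_not : s(y2, a2) ∉ p.edges := fun hh =>
    hdisjA a2 (p.snd_mem_support_of_mem_edges hh) ha2
  have step1 : s(y1, a1) ≠ e → K.Reachable y1 a1 := by
    intro hne1
    refine SimpleGraph.Adj.reachable ?_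
    rw [hKdef, del_adj]
    exact ⟨⟨hadj1, Or.inr hy1S, Or.inl ha1⟩, hne1⟩
  have step2 : s(y2, a2) ≠ e → K.Reachable y2 a2 := by
    intro hne2
    refine SimpleGraph.Adj.reachable ?_
    rw [hKdef, del_adj]
    exact ⟨⟨hadj2, Or.inr hy2S, Or.inl ha2⟩, hne2⟩
  have toA : ∀ w ∈ A ∪ S, ∃ a ∈ A, K.Reachable w a := by
    intro w hw
    rcases hw with hw | hw
    · exact ⟨w, hw, Reachable.refl _⟩
    · have hwp : w ∈ p.support := hw
      by_cases hep : e ∈ p.edges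
      · obtain ⟨c1, c2, h, t, d, hq, hse⟩ := dec_at_edge p e hep
        have hnodup := hp.support_nodup
        rw [hq, Walk.support_append, Walk.support_cons, List.tail_cons,
          List.nodup_append] at hnodup
        have hdisj2 : t.support.Disjoint d.support := fun _ ha hb => hnodup.2.2 _ ha _ hb rfl
        have hte : e ∉ t.edges := fun hh =>
          hdisj2 (t.snd_mem_support_of_mem_edges (hse ▸ hh)) d.start_mem_support
        have hde : e ∉ d.edges := fun hh =>
          hdisj2 t.end_mem_support (d.fst_mem_support_of_mem_edges (hse ▸ hh))
        have htp : ∀ e' ∈ t.edges, e' ∈ p.edges := by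
          intro e' he'
          rw [hq, Walk.edges_append, List.mem_append]
          exact Or.inl he'
        have hdp : ∀ e' ∈ d.edges, e' ∈ p.edges := by
          intro e' he'
          rw [hq, Walk.edges_append, List.mem_append, Walk.edges_cons, List.mem_cons]
          exact Or.inr (Or.inr he')
        have hsupp : w ∈ t.support ∨ w ∈ d.support := by
          rw [hq, Walk.support_append, Walk.support_cons, List.tail_cons,
            List.mem_append] at hwp
          exact hwp
        rcases hsupp with hwt | hwd
        · refine ⟨a1, ha1, Reachable.trans ?_ (step1 fun hh => hs1_not (by rw [hh]; exact hep))⟩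
          · refine route (t.takeUntil w hwt).reverse ?_ ?_
            · intro e' he'
              rw [Walk.edges_reverse, List.mem_reverse] at he'
              exact htp _ (t.edges_takeUntil_subset hwt he')
            · intro he'
              rw [Walk.edges_reverse, List.mem_reverse] at he'
              exact hte (t.edges_takeUntil_subset hwt he')
        · refine ⟨a2, ha2, Reachable.trans ?_ (step2 fun hh => hs2_not (by rw [hh]; exact hep))⟩
          · refine route (d.dropUntil w hwd) ?_ ?_
            · intro e' he'
              exact hdp _ (d.edges_dropUntil_subset hwd he')
            · intro he'
              exact hde (d.edges_dropUntil_subset hwd he')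
      · by_cases hs1 : s(y1, a1) = e
        · refine ⟨a2, ha2, Reachable.trans ?_ (step2 fun hh => hne (hs1.trans hh.symm))⟩
          refine route (p.dropUntil w hwp) ?_ ?_
          · intro e' he'
            exact p.edges_dropUntil_subset hwp he'
          · intro he'
            exact hep (p.edges_dropUntil_subset hwp he')
        · refine ⟨a1, ha1, Reachable.trans ?_ (step1 hs1)⟩
          refine route (p.takeUntil w hwp).reverse ?_ ?_
          · intro e' he'
            rw [Walk.edges_reverse, List.mem_reverse] at he'
            exact p.edges_takeUntil_subset hwp he'
          · intro he'
            rw [Walk.edges_reverse, List.mem_reverse] at he'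
            exact hep (p.edges_takeUntil_subset hwp he')
  intro u hu v hv
  obtain ⟨au, hau, hru⟩ := toA u hu
  obtain ⟨av, hav, hrv⟩ := toA v hv
  have hAr : K.Reachable au av :=
    (hA.2 e au hau av hav).mono (del_le (gr_mono G Set.subset_union_left) e)
  exact (hru.trans hAr).trans hrv.symm

lemma sd_main {V : Type*} [Fintype V] (G : SimpleGraph V) : SDProperty (Ce G) := by
  classical
  intro C hC C' hC' hss Y hY
  obtain ⟨hYne, hYsub, hCY, hmin⟩ := hY
  by_contra hcon
  push_neg at hcon
  obtain ⟨hns, hni⟩ := hcon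
  have hint : (Y ∩ C').Nonempty := hni
  obtain ⟨ymiss, hymissY, hymissC'⟩ := Set.not_subset.mp hns
  set A := C \ Y with hAdef
  have okA : OK G A := ok_of_mem hCY
  have hAcard : 1 < A.ncard := hCY.2
  have okC : OK G C := ok_of_mem hC
  have okB : OK G C' := ok_of_mem hC'
  have hBcard : 1 < C'.ncard := hC'.2
  have hC'subC : C' ⊆ C := hss.1
  by_cases hsub : C' ⊆ Y
  · -- C' ⊆ Y : the hard case
    have hYcard : 1 < Y.ncard := lt_of_lt_of_le hBcard (Set.ncard_le_ncard hsub (Set.toFinite _))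
    have hYC : ∀ S : Set V, S ⊆ Y → C \ (Y \ S) = A ∪ S := by
      intro S hS
      ext v
      simp only [Set.mem_diff, Set.mem_union, hAdef]
      constructor
      · rintro ⟨hvC, hv2⟩
        by_cases hvY : v ∈ Y
        · right; by_contra hvS; exact hv2 ⟨hvY, hvS⟩
        · left; exact ⟨hvC, hvY⟩
      · rintro (⟨hvC, hvY⟩ | hvS)
        · exact ⟨hvC, fun hh => hvY hh.1⟩
        · exact ⟨hYsub (hS hvS), fun hh => hh.2 hvS⟩
    have keyMin : ∀ S : Set V, S ⊆ Y → S.Nonempty → S ≠ Y → ¬ OK G (A ∪ S) := by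
      intro S hSY hSne hSneY hOK
      have hce : (A ∪ S) ∈ Ce G := mem_ce_of hOK
        (lt_of_lt_of_le hAcard (Set.ncard_le_ncard Set.subset_union_left (Set.toFinite _)))
      refine hmin (Y \ S) ?_ ?_ (by rw [hYC S hSY]; exact hce)
      · rw [Set.diff_nonempty]
        exact fun h => hSneY (Set.Subset.antisymm hSY h)
      · constructor
        · exact Set.diff_subset
        · intro h2
          obtain ⟨s0, hs0⟩ := hSne
          exact (h2 (hSY hs0)).2 hs0
    have hAY : ∀ v ∈ Y, v ∉ A := fun v hv hva => hva.2 hv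
    obtain ⟨y0, hy0B⟩ := okB.1
    have hy0Y : y0 ∈ Y := hsub hy0B
    set R := {v | v ∈ Y ∧ (Gr G Y).Reachable y0 v} with hRdef
    have hy0R : y0 ∈ R := ⟨hy0Y, Reachable.refl _⟩
    have hRY : ∀ v ∈ R, v ∈ Y := fun v hv => hv.1
    have hRclosed : ∀ x ∈ R, ∀ y, (Gr G Y).Adj x y → y ∈ R :=
      fun x hx y hxy => ⟨hxy.2.2, hx.2.trans hxy.reachable⟩
    obtain ⟨astar, hastar⟩ := okA.1
    have get_cross : ∀ e : Sym2 V, ∃ x a, x ∈ R ∧ a ∈ A ∧ G.Adj x a ∧ s(x, a) ≠ e := by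
      intro e
      obtain ⟨wlk⟩ := okC.2 e y0 (hYsub hy0Y) astar hastar.1
      obtain ⟨x, y, hxy, hxR, hyR⟩ :=
        cross_edge (R := R) wlk hy0R (fun hc => hastar.2 (hRY _ hc))
      have hxy' := del_adj.mp hxy
      have hxyG : G.Adj x y := hxy'.1.1
      have hxyne : s(x, y) ≠ e := hxy'.2
      have hyA : y ∈ A := by
        have hyC : y ∈ C := hxy'.1.2.2
        by_contra hyA
        have hyYmem : y ∈ Y := by
          by_contra hyY
          exact hyA ⟨hyC, hyY⟩
        exact hyR (hRclosed x hxR y ⟨hxyG, hRY x hxR, hyYmem⟩)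
      exact ⟨x, y, hxR, hyA, hxyG, hxyne⟩
    obtain ⟨y1, a1, hy1R, ha1, hadj1, _⟩ := get_cross (Sym2.diag y0)
    obtain ⟨y2, a2, hy2R, ha2, hadj2, hne21⟩ := get_cross s(y1, a1)
    have hreach : (Gr G Y).Reachable y1 y2 := hy1R.2.symm.trans hy2R.2
    obtain ⟨q0, hq0len⟩ := hreach.exists_walk_length_eq_dist
    set q := q0.bypass with hq
    have hqp : q.IsPath := SimpleGraph.Walk.bypass_isPath q0
    have hqlen : q.length = (Gr G Y).dist y1 y2 :=
      le_antisymm (hq0len ▸ SimpleGraph.Walk.length_bypass_le q0) (SimpleGraph.dist_le q)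
    have hchord : ∀ x z, x ∈ q.support → z ∈ q.support → (Gr G Y).Adj x z →
        s(x, z) ∈ q.edges := by
      intro x z hx hz hadj
      by_contra hnotin
      obtain ⟨q', hq'⟩ := chord_shortcut q x z hx hz hadj hnotin
      have := SimpleGraph.dist_le q'
      omega
    set S : Set V := {v | v ∈ q.support} with hSdef
    have hSY : S ⊆ Y := fun v hv => gr_walk_support le_rfl q (hRY y1 hy1R) v hv
    have hSne : S.Nonempty := ⟨y1, q.start_mem_support⟩
    have okAS : OK G (A ∪ S) :=
      ok_ear okA (gr_le G Y) q hqp (fun v hv => hAY v (hSY hv)) ha1 ha2 hadj1 hadj2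
        (fun hh => hne21 hh.symm)
    by_cases hSeqY : S = Y
    · -- final contradiction via 2-edge-connectivity of C' inside the chordless path q
      obtain ⟨b1, b2, hb1, hb2, hbne⟩ := (Set.one_lt_ncard_iff (Set.toFinite _)).mp hBcard
      obtain ⟨wB⟩ := connOn_of_ok okB b1 hb1 b2 hb2
      obtain ⟨c1, c2, hcadj⟩ : ∃ c1 c2, (Gr G C').Adj c1 c2 := by
        cases wB with
        | nil => exact absurd rfl hbne
        | cons h p => exact ⟨_, _, h⟩
      have hc1B : c1 ∈ C' := hcadj.2.1
      have hc2B : c2 ∈ C' := hcadj.2.2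
      have hmemS : ∀ v ∈ C', v ∈ q.support := by
        intro v hv
        have : v ∈ S := by rw [hSeqY]; exact hsub hv
        exact this
      have heB : s(c1, c2) ∈ q.edges :=
        hchord c1 c2 (hmemS c1 hc1B) (hmemS c2 hc2B) ⟨hcadj.1, hsub hc1B, hsub hc2B⟩
      have hwalkB := okB.2 s(c1, c2) c1 hc1B c2 hc2B
      have hle : Gr G C' \ SimpleGraph.fromEdgeSet {s(c1, c2)} ≤
          SimpleGraph.fromEdgeSet {e' | e' ∈ q.edges} \ SimpleGraph.fromEdgeSet {s(c1, c2)} := by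
        intro x y hxy
        rw [del_adj] at hxy ⊢
        refine ⟨?_, hxy.2⟩
        rw [SimpleGraph.fromEdgeSet_adj]
        exact ⟨hchord x y (hmemS x hxy.1.2.1) (hmemS y hxy.1.2.2)
          ⟨hxy.1.1, hsub hxy.1.2.1, hsub hxy.1.2.2⟩, hxy.1.1.ne⟩
      exact path_edge_sep q hqp heB (hwalkB.mono hle)
    · exact keyMin S hSY hSne hSeqY okAS
  · -- C' ⊄ Y : use the union A ∪ C'
    obtain ⟨w, hwC', hwY⟩ := Set.not_subset.mp hsub
    have hwA : w ∈ A := ⟨hC'subC hwC', hwY⟩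
    have okU : OK G (A ∪ C') := ok_union okA okB ⟨w, hwA, hwC'⟩
    have hceU : (A ∪ C') ∈ Ce G := mem_ce_of okU
      (lt_of_lt_of_le hAcard (Set.ncard_le_ncard Set.subset_union_left (Set.toFinite _)))
    have hZ : C \ (Y \ C') = A ∪ C' := by
      ext v
      simp only [Set.mem_diff, Set.mem_union, hAdef]
      constructor
      · rintro ⟨hvC, hv2⟩
        by_cases hvY : v ∈ Y
        · right; by_contra hvC'; exact hv2 ⟨hvY, hvC'⟩
        · left; exact ⟨hvC, hvY⟩
      · rintro (⟨hvC, hvY⟩ | hvC')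
        · exact ⟨hvC, fun hh => hvY hh.1⟩
        · exact ⟨hC'subC hvC', fun hh => hh.2 hvC'⟩
    refine hmin (Y \ C') ⟨ymiss, hymissY, hymissC'⟩ ?_ (by rw [hZ]; exact hceU)
    constructor
    · exact Set.diff_subset
    · intro hsub2
      obtain ⟨z, hzY, hzC'⟩ := hint
      exact (hsub2 hzY).2 hzC'

end SD9

theorem stmt9 {V : Type*} [Fintype V] (G : SimpleGraph V) (hG : TwoEC G) :
    SDProperty (Ce G) :=
  SD9.sd_main G
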